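/- arXiv:0904.1457 — 3 statements merged into one kernel-verified Lean document; each statement's English description precedes it below -/
import Mathlib

section
/- Let s', ω1, …, ω15 be real numbers. Define three vectors in ℝ⁷ depending on a real parameter t: a0(t) = (1+s'·t, −ω1·t, −ω2·t, −ω3·t, −ω4·t, −ω5·t, −ω6·t), a1(t) = (ω1·t, 1+s'·t, −ω7·t, −ω8·t, −ω9·t, −ω10·t, −ω11·t), a2(t) = (ω2·t, ω7·t, 1+s'·t, −ω12·t, −ω13·t, −ω14·t, −ω15·t). Then the following are equivalent: (i) for every t ∈ ℝ the vectors a0(t), a1(t), a2(t) are pairwise orthogonal (for the Euclidean inner product on ℝ⁷) and have equal Euclidean norms; (ii) the five conditions hold: Σ_{i=2}^{6} ωi·ω_{i+5} = 0, ω1·ω7 − Σ_{i=3}^{6} ωi·ω_{i+9} = 0, ω1·ω2 + Σ_{i=8}^{11} ωi·ω_{i+4} = 0, Σ_{i=2}^{6} ωi² = Σ_{i=7}^{11} ωi², and ω1² + Σ_{i=3}^{6} ωi² = ω7² + Σ_{i=12}^{15} ωi². -/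
open Real
open scoped RealInnerProductSpace

/-- A vector in the Euclidean space `ℝ⁷` given by its seven coordinates. -/
noncomputable def vec7 (c0 c1 c2 c3 c4 c5 c6 : ℝ) : EuclideanSpace ℝ (Fin 7) :=
  (WithLp.equiv 2 (Fin 7 → ℝ)).symm ![c0, c1, c2, c3, c4, c5, c6]

lemma inner_vec7 (a b c d e f g a' b' c' d' e' f' g' : ℝ) :
    ⟪vec7 a b c d e f g, vec7 a' b' c' d' e' f' g'⟫ =
      a*a' + b*b' + c*c' + d*d' + e*e' + f*f' + g*g' := by
  simp [vec7, PiLp.inner_apply, Fin.sum_univ_seven]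
  ring

lemma norm_eq_iff_inner (x y : EuclideanSpace ℝ (Fin 7)) :
    ‖x‖ = ‖y‖ ↔ ⟪x, x⟫ = ⟪y, y⟫ := by
  rw [real_inner_self_eq_norm_sq, real_inner_self_eq_norm_sq,
    sq_eq_sq₀ (norm_nonneg x) (norm_nonneg y)]

/-- the vectors `a0 t`, `a1 t`, `a2 t` are pairwise orthogonal with
equal Euclidean norms for every `t` iff the five algebraic conditions on the `ωᵢ` hold. -/
theorem stmt0 (s' ω1 ω2 ω3 ω4 ω5 ω6 ω7 ω8 ω9 ω10 ω11 ω12 ω13 ω14 ω15 : ℝ) :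
    (∀ t : ℝ,
      let a0 : EuclideanSpace ℝ (Fin 7) :=
        vec7 (1 + s' * t) (-(ω1 * t)) (-(ω2 * t)) (-(ω3 * t)) (-(ω4 * t)) (-(ω5 * t)) (-(ω6 * t))
      let a1 : EuclideanSpace ℝ (Fin 7) :=
        vec7 (ω1 * t) (1 + s' * t) (-(ω7 * t)) (-(ω8 * t)) (-(ω9 * t)) (-(ω10 * t)) (-(ω11 * t))
      let a2 : EuclideanSpace ℝ (Fin 7) :=
        vec7 (ω2 * t) (ω7 * t) (1 + s' * t) (-(ω12 * t)) (-(ω13 * t)) (-(ω14 * t)) (-(ω15 * t))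
      ⟪a0, a1⟫ = 0 ∧ ⟪a0, a2⟫ = 0 ∧ ⟪a1, a2⟫ = 0 ∧ ‖a0‖ = ‖a1‖ ∧ ‖a0‖ = ‖a2‖)
    ↔
    (ω2 * ω7 + ω3 * ω8 + ω4 * ω9 + ω5 * ω10 + ω6 * ω11 = 0 ∧
     ω1 * ω7 - (ω3 * ω12 + ω4 * ω13 + ω5 * ω14 + ω6 * ω15) = 0 ∧
     ω1 * ω2 + (ω8 * ω12 + ω9 * ω13 + ω10 * ω14 + ω11 * ω15) = 0 ∧
     ω2 ^ 2 + ω3 ^ 2 + ω4 ^ 2 + ω5 ^ 2 + ω6 ^ 2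
       = ω7 ^ 2 + ω8 ^ 2 + ω9 ^ 2 + ω10 ^ 2 + ω11 ^ 2 ∧
     ω1 ^ 2 + ω3 ^ 2 + ω4 ^ 2 + ω5 ^ 2 + ω6 ^ 2
       = ω7 ^ 2 + ω12 ^ 2 + ω13 ^ 2 + ω14 ^ 2 + ω15 ^ 2) := by
  simp only [norm_eq_iff_inner, inner_vec7]
  constructor
  · intro h
    obtain ⟨e1, e2, e3, e4, e5⟩ := h 1
    refine ⟨by linarith [e1], by linarith [e2], by linarith [e3],
      by linear_combination e4, by linear_combination e5⟩
  · rintro ⟨c1, c2, c3, c4, c5⟩ t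
    refine ⟨by linear_combination t^2 * c1, by linear_combination -t^2 * c2,
      by linear_combination t^2 * c3, by linear_combination t^2 * c4,
      by linear_combination t^2 * c5⟩
end

section
/- Let x, y, z be real numbers such that 16x⁶ − 120x⁴(y² + z²) + 90x²(y² + z²)² − 5(y² + z²)³ = 0, y⁶ − 15y⁴z² + 15y²z⁴ − z⁶ = 0, and y·z·(3y² − z²)·(y² − 3z²) = 0. Then x = y = z = 0. -/
/-- the polynomial system coming from the coefficients of
`cos(12φ)`, `cos(6θ+12φ)` and `sin(6θ+12φ)` has only the trivial real solution. -/
theorem stmt2 (x y z : ℝ)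
    (h1 : 16 * x ^ 6 - 120 * x ^ 4 * (y ^ 2 + z ^ 2)
      + 90 * x ^ 2 * (y ^ 2 + z ^ 2) ^ 2 - 5 * (y ^ 2 + z ^ 2) ^ 3 = 0)
    (h2 : y ^ 6 - 15 * y ^ 4 * z ^ 2 + 15 * y ^ 2 * z ^ 4 - z ^ 6 = 0)
    (h3 : y * z * (3 * y ^ 2 - z ^ 2) * (y ^ 2 - 3 * z ^ 2) = 0) :
    x = 0 ∧ y = 0 ∧ z = 0 := by
  have six : (6 : ℕ) ≠ 0 := by norm_num
  have hyz : y = 0 ∧ z = 0 := by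
    rcases mul_eq_zero.1 h3 with h | h
    · rcases mul_eq_zero.1 h with h | h
      · rcases mul_eq_zero.1 h with h | h
        · subst h
          have hz6 : z ^ 6 = 0 := by linarith [sq_nonneg z, sq_nonneg (z^3)]
          exact ⟨rfl, pow_eq_zero_iff six |>.1 hz6⟩
        · subst h
          have hy6 : y ^ 6 = 0 := by nlinarith
          exact ⟨pow_eq_zero_iff six |>.1 hy6, rfl⟩
      · have hy6 : y ^ 6 = 0 := by
          linear_combination (1/64) * h2 + (1/64) * (21*y^4 + 12*y^2*z^2 - z^4) * h
        have hy : y = 0 := pow_eq_zero_iff six |>.1 hy6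
        subst hy
        have hz6 : z ^ 6 = 0 := by nlinarith
        exact ⟨rfl, pow_eq_zero_iff six |>.1 hz6⟩
    · have hz6 : z ^ 6 = 0 := by
        linear_combination (-1/64) * h2 + (1/64) * (y^4 - 12*y^2*z^2 - 21*z^4) * h
      have hz : z = 0 := pow_eq_zero_iff six |>.1 hz6
      subst hz
      have hy6 : y ^ 6 = 0 := by nlinarith
      exact ⟨pow_eq_zero_iff six |>.1 hy6, rfl⟩
  obtain ⟨hy, hz⟩ := hyz
  subst hy; subst hz
  have hx6 : x ^ 6 = 0 := by linear_combination (1/16) * h1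
  exact ⟨pow_eq_zero_iff six |>.1 hx6, rfl, rfl⟩
end

section
/- Let s', ω1, …, ω11 and b1', …, b7' be real numbers with b1' = b2' = b3' = 0 and Σ_{i=2}^{6} ωi² = Σ_{i=7}^{11} ωi². Set β = Σ_{i=1}^{7} (bi')² and δ = ¼ (2(s'² + ω1²) + Σ_{i=2}^{11} ωi²). Then β + s'² + 6δ − ω1² − ω2² − ω7² = Σ_{i=4}^{7} (bi')² + ω2² + Σ_{i=8}^{11} ωi² + 2(2s'² + ω1² + Σ_{i=3}^{6} ωi²); in particular this quantity is nonnegative, and it is strictly positive whenever s' ≠ 0. -/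
/-- the positivity identity for `β + s'² + 6δ − ω1² − ω2² − ω7²`. -/
theorem stmt5 (s' ω1 ω2 ω3 ω4 ω5 ω6 ω7 ω8 ω9 ω10 ω11
    b1' b2' b3' b4' b5' b6' b7' : ℝ)
    (hb1 : b1' = 0) (hb2 : b2' = 0) (hb3 : b3' = 0)
    (hc4 : ω2 ^ 2 + ω3 ^ 2 + ω4 ^ 2 + ω5 ^ 2 + ω6 ^ 2
      = ω7 ^ 2 + ω8 ^ 2 + ω9 ^ 2 + ω10 ^ 2 + ω11 ^ 2) :
    let β : ℝ := b1' ^ 2 + b2' ^ 2 + b3' ^ 2 + b4' ^ 2 + b5' ^ 2 + b6' ^ 2 + b7' ^ 2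
    let δ : ℝ := (1/4) * (2 * (s' ^ 2 + ω1 ^ 2)
      + (ω2 ^ 2 + ω3 ^ 2 + ω4 ^ 2 + ω5 ^ 2 + ω6 ^ 2 + ω7 ^ 2 + ω8 ^ 2 + ω9 ^ 2 + ω10 ^ 2
        + ω11 ^ 2))
    β + s' ^ 2 + 6 * δ - ω1 ^ 2 - ω2 ^ 2 - ω7 ^ 2
      = (b4' ^ 2 + b5' ^ 2 + b6' ^ 2 + b7' ^ 2) + ω2 ^ 2
        + (ω8 ^ 2 + ω9 ^ 2 + ω10 ^ 2 + ω11 ^ 2)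
        + 2 * (2 * s' ^ 2 + ω1 ^ 2 + (ω3 ^ 2 + ω4 ^ 2 + ω5 ^ 2 + ω6 ^ 2)) ∧
    0 ≤ β + s' ^ 2 + 6 * δ - ω1 ^ 2 - ω2 ^ 2 - ω7 ^ 2 ∧
    (s' ≠ 0 → 0 < β + s' ^ 2 + 6 * δ - ω1 ^ 2 - ω2 ^ 2 - ω7 ^ 2) := by
  intro β δ
  have heq : β + s' ^ 2 + 6 * δ - ω1 ^ 2 - ω2 ^ 2 - ω7 ^ 2
      = (b4' ^ 2 + b5' ^ 2 + b6' ^ 2 + b7' ^ 2) + ω2 ^ 2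
        + (ω8 ^ 2 + ω9 ^ 2 + ω10 ^ 2 + ω11 ^ 2)
        + 2 * (2 * s' ^ 2 + ω1 ^ 2 + (ω3 ^ 2 + ω4 ^ 2 + ω5 ^ 2 + ω6 ^ 2)) := by
    simp only [β, δ, hb1, hb2, hb3]
    nlinarith [hc4]
  refine ⟨heq, ?_, ?_⟩
  · rw [heq]; positivity
  · intro hs; rw [heq]
    have : 0 < s' ^ 2 := by positivity
    nlinarith [sq_nonneg b4', sq_nonneg b5', sq_nonneg b6', sq_nonneg b7',
      sq_nonneg ω2, sq_nonneg ω8, sq_nonneg ω9, sq_nonneg ω10, sq_nonneg ω11,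
      sq_nonneg ω1, sq_nonneg ω3, sq_nonneg ω4, sq_nonneg ω5, sq_nonneg ω6]
end
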